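/- Let ρ be a weak contrast function on U and define h, C and Γ from ρ as in the context. Assume C is totally symmetric. Then for every x ∈ U and all v, w, u ∈ ℝⁿ: −ρ[vw|u](x) = Γ x v w u − (1/2) · C x v w u, and −ρ[u|vw](x) = Γ x v w u + (1/2) · C x v w u. (Paper's Proposition 3.27: the second and third diagonal derivatives of a weak contrast function express the Kossowski pseudo-connection and the cubic tensor.) -/

import Mathlib

noncomputable section

open Set

/-- ℝⁿ. -/
abbrev Vn (n : ℕ) : Type := Fin n → ℝ

/-- `ρ[v|w](x) = D²ρ(x,x)[(v,0),(0,w)]`. -/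
def rho2 {n : ℕ} (ρ : Vn n × Vn n → ℝ) (x v w : Vn n) : ℝ :=
  fderiv ℝ (fun q => fderiv ℝ ρ q (0, w)) (x, x) (v, 0)

/-- `ρ[vw|u](x) = D³ρ(x,x)[(v,0),(w,0),(0,u)]`. -/
def rho3L {n : ℕ} (ρ : Vn n × Vn n → ℝ) (x v w u : Vn n) : ℝ :=
  fderiv ℝ (fun q => fderiv ℝ (fun r => fderiv ℝ ρ r (0, u)) q (w, 0)) (x, x) (v, 0)

/-- `ρ[u|vw](x) = D³ρ(x,x)[(u,0),(0,v),(0,w)]`. -/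
def rho3R {n : ℕ} (ρ : Vn n × Vn n → ℝ) (x v w u : Vn n) : ℝ :=
  fderiv ℝ (fun q => fderiv ℝ (fun r => fderiv ℝ ρ r (0, w)) q (0, v)) (x, x) (u, 0)

/-- The metric induced by a weak contrast function: `h x v w = −ρ[v|w](x)`. -/
def hcon {n : ℕ} (ρ : Vn n × Vn n → ℝ) (x v w : Vn n) : ℝ := -(rho2 ρ x v w)

/-- The cubic tensor induced by a weak contrast function:
`C x v w u = ρ[vw|u](x) − ρ[u|vw](x)`. -/
def Ccon {n : ℕ} (ρ : Vn n × Vn n → ℝ) (x v w u : Vn n) : ℝ :=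
  rho3L ρ x v w u - rho3R ρ x v w u

/-- The Kossowski pseudo-connection (Levi-Civita expression) of `h`. -/
def Gcon {n : ℕ} (ρ : Vn n × Vn n → ℝ) (x v w u : Vn n) : ℝ :=
  ((1:ℝ)/2) * (fderiv ℝ (fun y => hcon ρ y w u) x v
    + fderiv ℝ (fun y => hcon ρ y u v) x w
    - fderiv ℝ (fun y => hcon ρ y v w) x u)

section Helpers

variable {E : Type*} [NormedAddCommGroup E] [NormedSpace ℝ E]

/-- Derivative of an evaluated derivative in terms of the second derivative. -/
lemma fderiv_eval_aux (f : E → ℝ) {s : Set E} (hs : IsOpen s)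
    (hf : ContDiffOn ℝ (⊤ : ℕ∞) f s) {p : E} (hp : p ∈ s) (m a : E) :
    fderiv ℝ (fun r => fderiv ℝ f r m) p a = fderiv ℝ (fderiv ℝ f) p a m := by
  have hdf : ContDiffOn ℝ (⊤ : ℕ∞) (fderiv ℝ f) s := hf.fderiv_of_isOpen hs (by simp)
  have hdiff : DifferentiableAt ℝ (fderiv ℝ f) p :=
    (hdf.differentiableOn (by simp)).differentiableAt (hs.mem_nhds hp)
  have h2 : HasFDerivAt (fun r => fderiv ℝ f r m)
      ((ContinuousLinearMap.apply ℝ ℝ m).comp (fderiv ℝ (fderiv ℝ f) p)) p :=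
    (ContinuousLinearMap.apply ℝ ℝ m).hasFDerivAt.comp p hdiff.hasFDerivAt
  rw [h2.fderiv]
  rfl

/-- Schwarz symmetry of the second derivative for a function smooth on an open set. -/
lemma schwarz_aux (f : E → ℝ) {s : Set E} (hs : IsOpen s)
    (hf : ContDiffOn ℝ (⊤ : ℕ∞) f s) {p : E} (hp : p ∈ s) (a b : E) :
    fderiv ℝ (fderiv ℝ f) p a b = fderiv ℝ (fderiv ℝ f) p b a := by
  have hfa : ContDiffAt ℝ (⊤ : ℕ∞) f p := hf.contDiffAt (hs.mem_nhds hp)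
  have h2 : (2 : WithTop ℕ∞) ≤ ((⊤ : ℕ∞) : WithTop ℕ∞) := by
    have h : ((2:ℕ∞) : WithTop ℕ∞) ≤ ((⊤ : ℕ∞) : WithTop ℕ∞) := WithTop.coe_le_coe.mpr le_top
    simpa using h
  exact hfa.isSymmSndFDerivAt (by rw [minSmoothness_of_isRCLikeNormedField]; exact h2) a b

/-- Chain rule along the diagonal. -/
lemma fderiv_diag_aux {V : Type*} [NormedAddCommGroup V] [NormedSpace ℝ V]
    (g : V × V → ℝ) {x : V} (hg : DifferentiableAt ℝ g (x, x)) (v : V) :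
    fderiv ℝ (fun y => g (y, y)) x v
      = fderiv ℝ g (x, x) (v, 0) + fderiv ℝ g (x, x) (0, v) := by
  have hd : HasFDerivAt (fun y : V => (y, y))
      ((ContinuousLinearMap.id ℝ V).prod (ContinuousLinearMap.id ℝ V)) x :=
    ((ContinuousLinearMap.id ℝ V).prod (ContinuousLinearMap.id ℝ V)).hasFDerivAt
  have hc : HasFDerivAt (g ∘ fun y => (y, y))
      ((fderiv ℝ g (x, x)).comp
        ((ContinuousLinearMap.id ℝ V).prod (ContinuousLinearMap.id ℝ V))) x :=
    HasFDerivAt.comp (f := fun y => (y, y)) x hg.hasFDerivAt hd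
  rw [show (fun y => g (y, y)) = g ∘ fun y => (y, y) from rfl, hc.fderiv]
  have : ((v, v) : V × V) = (v, 0) + (0, v) := by simp
  show fderiv ℝ g (x, x) (v, v) = _
  rw [this, map_add]

end Helpers

section Key

variable {n : ℕ} {U : Set (Vn n)} {ρ : Vn n × Vn n → ℝ}

lemma gsmooth (hUopen : IsOpen U) (hρsmooth : ContDiffOn ℝ (⊤ : ℕ∞) ρ (U ×ˢ U)) (u : Vn n) :
    ContDiffOn ℝ (⊤ : ℕ∞) (fun q => fderiv ℝ ρ q ((0 : Vn n), u)) (U ×ˢ U) :=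
  (hρsmooth.fderiv_of_isOpen (hUopen.prod hUopen) (by simp)).clm_apply contDiffOn_const

/-- Key 1: derivative of `h` along the diagonal. -/
lemma key1 (hUopen : IsOpen U) (hρsmooth : ContDiffOn ℝ (⊤ : ℕ∞) ρ (U ×ˢ U)) {x : Vn n} (hx : x ∈ U) (v w u : Vn n) :
    fderiv ℝ (fun y => hcon ρ y w u) x v
      = -(rho3L ρ x v w u + rho3R ρ x v u w) := by
  have hO : IsOpen (U ×ˢ U) := hUopen.prod hUopen
  have hp : ((x, x) : Vn n × Vn n) ∈ U ×ˢ U := ⟨hx, hx⟩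
  set g : Vn n × Vn n → ℝ := fun q => fderiv ℝ ρ q ((0 : Vn n), u) with hgdef
  have hg : ContDiffOn ℝ (⊤ : ℕ∞) g (U ×ˢ U) := gsmooth hUopen hρsmooth u
  set G : Vn n × Vn n → ℝ := fun q => fderiv ℝ g q ((w : Vn n), 0) with hGdef
  have hG : ContDiffOn ℝ (⊤ : ℕ∞) G (U ×ˢ U) :=
    (hg.fderiv_of_isOpen hO (by simp)).clm_apply contDiffOn_const
  have hGd : DifferentiableAt ℝ G (x, x) :=
    (hG.differentiableOn (by simp)).differentiableAt (hO.mem_nhds hp)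
  have h1 : fderiv ℝ (fun y => hcon ρ y w u) x v
      = -fderiv ℝ (fun y => G (y, y)) x v := by
    have : (fun y => hcon ρ y w u) = fun y => -(G (y, y)) := rfl
    rw [this, fderiv_fun_neg]
    rfl
  rw [h1, fderiv_diag_aux G hGd v]
  have h2 : fderiv ℝ G (x, x) (v, 0) = rho3L ρ x v w u := rfl
  have h3 : fderiv ℝ G (x, x) ((0 : Vn n), v) = rho3R ρ x v u w := by
    have e1 : fderiv ℝ G (x, x) ((0 : Vn n), v)
        = fderiv ℝ (fderiv ℝ g) (x, x) ((0 : Vn n), v) ((w : Vn n), 0) :=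
      fderiv_eval_aux g hO hg hp _ _
    have e2 : fderiv ℝ (fderiv ℝ g) (x, x) ((0 : Vn n), v) ((w : Vn n), 0)
        = fderiv ℝ (fderiv ℝ g) (x, x) ((w : Vn n), 0) ((0 : Vn n), v) :=
      schwarz_aux g hO hg hp _ _
    have e3 : fderiv ℝ (fderiv ℝ g) (x, x) ((w : Vn n), 0) ((0 : Vn n), v)
        = fderiv ℝ (fun q => fderiv ℝ g q ((0 : Vn n), v)) (x, x) ((w : Vn n), 0) :=
      (fderiv_eval_aux g hO hg hp _ _).symm
    rw [e1, e2, e3]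
    rfl
  rw [h2, h3]

/-- Key 2: symmetry of `rho3R` in its two inner arguments. -/
lemma key2 (hUopen : IsOpen U) (hρsmooth : ContDiffOn ℝ (⊤ : ℕ∞) ρ (U ×ˢ U)) {x : Vn n} (hx : x ∈ U) (v w u : Vn n) :
    rho3R ρ x v w u = rho3R ρ x w v u := by
  have hO : IsOpen (U ×ˢ U) := hUopen.prod hUopen
  have hp : ((x, x) : Vn n × Vn n) ∈ U ×ˢ U := ⟨hx, hx⟩
  have heq : (fun q => fderiv ℝ (fun r => fderiv ℝ ρ r ((0 : Vn n), w)) q ((0 : Vn n), v))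
      =ᶠ[nhds ((x, x) : Vn n × Vn n)]
      (fun q => fderiv ℝ (fun r => fderiv ℝ ρ r ((0 : Vn n), v)) q ((0 : Vn n), w)) := by
    filter_upwards [hO.mem_nhds hp] with q hq
    rw [fderiv_eval_aux ρ hO hρsmooth hq, fderiv_eval_aux ρ hO hρsmooth hq,
      schwarz_aux ρ hO hρsmooth hq]
  show fderiv ℝ _ (x, x) ((u : Vn n), 0) = fderiv ℝ _ (x, x) ((u : Vn n), 0)
  rw [heq.fderiv_eq]

end Key

/-- Paper's Proposition 3.27: for a weak contrast function `ρ` whose induced cubic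
tensor `C` is totally symmetric, the second and third diagonal derivatives of `ρ`
express the Kossowski pseudo-connection and the cubic tensor:
`−ρ[vw|u] = Γ − (1/2)C` and `−ρ[u|vw] = Γ + (1/2)C`. -/
theorem statement17 {n : ℕ} (U : Set (Vn n)) (hUopen : IsOpen U)
    (ρ : Vn n × Vn n → ℝ)
    (hρsmooth : ContDiffOn ℝ (⊤ : ℕ∞) ρ (U ×ˢ U))
    (hρ0 : ∀ x ∈ U, ρ (x, x) = 0)
    (hρ1 : ∀ x ∈ U, fderiv ℝ ρ (x, x) = 0)
    (hCsymm : ∀ x ∈ U, ∀ v w u : Vn n,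
      Ccon ρ x v w u = Ccon ρ x w v u ∧ Ccon ρ x v w u = Ccon ρ x v u w) :
    ∀ x ∈ U, ∀ v w u : Vn n,
      -(rho3L ρ x v w u) = Gcon ρ x v w u - ((1:ℝ)/2) * Ccon ρ x v w u ∧
      -(rho3R ρ x v w u) = Gcon ρ x v w u + ((1:ℝ)/2) * Ccon ρ x v w u := by
  intro x hx v w u
  have hA1 := key1 hUopen hρsmooth hx v w u
  have hA2 := key1 hUopen hρsmooth hx w u v
  have hA3 := key1 hUopen hρsmooth hx u v w
  have hR1 := key2 hUopen hρsmooth hx v u w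
  have hR2 := key2 hUopen hρsmooth hx w v u
  have hR3 := key2 hUopen hρsmooth hx u w v
  -- C is totally symmetric: C(u,v,w) = C(w,u,v)
  have hC1 : Ccon ρ x u v w = Ccon ρ x u w v := (hCsymm x hx u v w).2
  have hC2 : Ccon ρ x u w v = Ccon ρ x w u v := (hCsymm x hx u w v).1
  have hCdef1 : Ccon ρ x v w u = rho3L ρ x v w u - rho3R ρ x v w u := rfl
  have hCdef2 : Ccon ρ x u v w = rho3L ρ x u v w - rho3R ρ x u v w := rfl
  have hCdef3 : Ccon ρ x w u v = rho3L ρ x w u v - rho3R ρ x w u v := rfl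
  unfold Gcon
  rw [hA1, hA2, hA3]
  constructor <;> linarith
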